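/- Let X be an ℝ^d-valued random variable with E|X|² < ∞, and let x̄* = E[X e^{-βL(X)}]/E[e^{-βL(X)}] where L : ℝ^d → ℝ is measurable with L ≥ L_m and E[e^{-βL(X)}] = M_L > 0. Then E|X - x̄*|² ≤ V + e^{-βL_m} V / M_L, where V = E|X - E X|². -/

import Mathlib

open MeasureTheory Real

/-- E|X - x̄*|² ≤ V + e^{-βL_m} V / M_L where V is the variance of X and
M_L = E e^{-βL(X)} is the Gibbs mass. -/
theorem stmt_3 {d : ℕ} {Ω : Type*} [MeasurableSpace Ω] (μ : Measure Ω)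
    [IsProbabilityMeasure μ]
    (X : Ω → EuclideanSpace ℝ (Fin d)) (L : EuclideanSpace ℝ (Fin d) → ℝ)
    (hL : Measurable L) (β : ℝ) (hβ : 0 < β) (Lm : ℝ) (hLm : ∀ x, Lm ≤ L x)
    (hIX : Integrable X μ)
    (hIX2 : Integrable (fun ω => ‖X ω‖ ^ 2) μ)
    (hI1 : Integrable (fun ω => Real.exp (-β * L (X ω))) μ)
    (hI2 : Integrable (fun ω => Real.exp (-β * L (X ω)) • X ω) μ)
    (M : ℝ) (hM : M = ∫ ω, Real.exp (-β * L (X ω)) ∂μ) (hMpos : 0 < M)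
    (xbar : EuclideanSpace ℝ (Fin d))
    (hxbar : xbar = M⁻¹ • ∫ ω, Real.exp (-β * L (X ω)) • X ω ∂μ)
    (V : ℝ) (hV : V = ∫ ω, ‖X ω - ∫ ω', X ω' ∂μ‖ ^ 2 ∂μ) :
    (∫ ω, ‖X ω - xbar‖ ^ 2 ∂μ) ≤ V + Real.exp (-β * Lm) * V / M := by
  set m : EuclideanSpace ℝ (Fin d) := ∫ ω', X ω' ∂μ with hm
  set e : Ω → ℝ := fun ω => Real.exp (-β * L (X ω)) with he
  have hepos : ∀ ω, 0 < e ω := fun ω => Real.exp_pos _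
  have hebd : ∀ ω, e ω ≤ Real.exp (-β * Lm) := by
    intro ω
    exact Real.exp_le_exp.2 (by nlinarith [hLm (X ω)])
  -- integrability of ‖X - m‖²
  have hXm : Integrable (fun ω => X ω - m) μ := hIX.sub (integrable_const m)
  have hXmsm : AEStronglyMeasurable (fun ω => X ω - m) μ := hXm.aestronglyMeasurable
  have hsm2 : AEStronglyMeasurable (fun ω => ‖X ω - m‖ ^ 2) μ := by
    simpa [sq, Pi.mul_def] using hXmsm.norm.mul hXmsm.norm
  have hInm2 : Integrable (fun ω => ‖X ω - m‖ ^ 2) μ := by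
    have hb : Integrable (fun ω => 2 * ‖X ω‖ ^ 2 + 2 * ‖m‖ ^ 2) μ :=
      (hIX2.const_mul 2).add (integrable_const _)
    refine hb.mono hsm2 ?_
    · filter_upwards with ω
      have h1 : ‖X ω - m‖ ≤ ‖X ω‖ + ‖m‖ := norm_sub_le _ _
      have h2 : (0:ℝ) ≤ ‖X ω - m‖ := norm_nonneg _
      rw [Real.norm_eq_abs, Real.norm_eq_abs, abs_of_nonneg (by positivity),
        abs_of_nonneg (by positivity)]
      nlinarith [mul_self_le_mul_self h2 h1, sq_nonneg (‖X ω‖ - ‖m‖), sq_nonneg (‖X ω‖ + ‖m‖)]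
  have hVnonneg : 0 ≤ V := by
    rw [hV]; exact integral_nonneg fun ω => by positivity
  -- cross term vanishes
  have hcross : ∫ ω, (inner ℝ (m - xbar) (X ω - m) : ℝ) ∂μ = 0 := by
    rw [integral_inner hXm]
    have : ∫ ω, (X ω - m) ∂μ = 0 := by
      rw [integral_sub hIX (integrable_const m), integral_const]
      simp [hm]
    rw [this, inner_zero_right]
  -- decomposition
  have hdecomp : ∫ ω, ‖X ω - xbar‖ ^ 2 ∂μ = V + ‖m - xbar‖ ^ 2 := by
    have hpt : ∀ ω, ‖X ω - xbar‖ ^ 2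
        = ‖X ω - m‖ ^ 2 + (2 * (inner ℝ (m - xbar) (X ω - m) : ℝ) + ‖m - xbar‖ ^ 2) := by
      intro ω
      have : X ω - xbar = (X ω - m) + (m - xbar) := by abel
      rw [this, norm_add_sq_real, real_inner_comm]
      ring
    have hIc : Integrable (fun ω => (2 : ℝ) * (inner ℝ (m - xbar) (X ω - m) : ℝ)) μ :=
      (hXm.const_inner (m - xbar)).const_mul 2
    calc ∫ ω, ‖X ω - xbar‖ ^ 2 ∂μ
        = ∫ ω, (‖X ω - m‖ ^ 2 + (2 * (inner ℝ (m - xbar) (X ω - m) : ℝ) + ‖m - xbar‖ ^ 2)) ∂μ := by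
          exact integral_congr_ae (Filter.Eventually.of_forall hpt)
      _ = (∫ ω, ‖X ω - m‖ ^ 2 ∂μ)
          + ∫ ω, (2 * (inner ℝ (m - xbar) (X ω - m) : ℝ) + ‖m - xbar‖ ^ 2) ∂μ := by
          exact integral_add hInm2 (hIc.add (integrable_const _))
      _ = V + ‖m - xbar‖ ^ 2 := by
          rw [integral_add hIc (integrable_const _), integral_const_mul, hcross,
            integral_const]
          simp [hV]
  -- representation of m - xbar
  have hIem : Integrable (fun ω => e ω • (m - X ω)) μ := by
    have : (fun ω => e ω • (m - X ω)) = fun ω => e ω • m - e ω • X ω := by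
      funext ω; rw [smul_sub]
    rw [this]
    exact (hI1.smul_const m).sub hI2
  have hrep : m - xbar = M⁻¹ • ∫ ω, e ω • (m - X ω) ∂μ := by
    have h1 : ∫ ω, e ω • (m - X ω) ∂μ = M • m - M • xbar := by
      have : (fun ω => e ω • (m - X ω)) = fun ω => e ω • m - e ω • X ω := by
        funext ω; rw [smul_sub]
      rw [this, integral_sub (hI1.smul_const m) hI2, integral_smul_const, ← hM, hxbar,
        smul_smul, mul_inv_cancel₀ hMpos.ne', one_smul]
    rw [h1, smul_sub, smul_smul, smul_smul, inv_mul_cancel₀ hMpos.ne', one_smul, one_smul]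
  -- quantities
  set A : ℝ := ∫ ω, e ω * ‖m - X ω‖ ∂μ with hA
  set B : ℝ := ∫ ω, e ω * ‖m - X ω‖ ^ 2 ∂μ with hB
  have hInm2' : Integrable (fun ω => ‖m - X ω‖ ^ 2) μ := by
    simpa [norm_sub_rev] using hInm2
  have hesm : AEStronglyMeasurable e μ := hI1.aestronglyMeasurable
  have hIB : Integrable (fun ω => e ω * ‖m - X ω‖ ^ 2) μ := by
    refine (hInm2'.const_mul (Real.exp (-β * Lm))).mono
      ((hesm.mul hsm2).congr ?_) ?_
    · filter_upwards with ω; simp [norm_sub_rev]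
    · filter_upwards with ω
      have := hebd ω
      have h0 := (hepos ω).le
      rw [Real.norm_eq_abs, abs_of_nonneg (by positivity), Real.norm_eq_abs,
        abs_of_nonneg (by positivity)]
      nlinarith [sq_nonneg (‖m - X ω‖)]
  have hInm1 : Integrable (fun ω => ‖m - X ω‖) μ := by
    simpa [norm_sub_rev] using hXm.norm
  have hIA : Integrable (fun ω => e ω * ‖m - X ω‖) μ := by
    refine (hInm1.const_mul (Real.exp (-β * Lm))).mono
      (hesm.mul hXmsm.norm |>.congr ?_) ?_
    · filter_upwards with ω; simp [norm_sub_rev]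
    · filter_upwards with ω
      have := hebd ω
      have h0 := (hepos ω).le
      rw [Real.norm_eq_abs, abs_of_nonneg (by positivity), Real.norm_eq_abs,
        abs_of_nonneg (by positivity)]
      nlinarith [norm_nonneg (m - X ω)]
  have hAnonneg : 0 ≤ A := integral_nonneg fun ω => by positivity
  -- Cauchy–Schwarz : A² ≤ M * B
  have hCS : A ^ 2 ≤ M * B := by
    set t : ℝ := A / M with ht
    have hq : 0 ≤ ∫ ω, (t ^ 2 * e ω - 2 * t * (e ω * ‖m - X ω‖) + e ω * ‖m - X ω‖ ^ 2) ∂μ := by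
      refine integral_nonneg fun ω => ?_
      have : t ^ 2 * e ω - 2 * t * (e ω * ‖m - X ω‖) + e ω * ‖m - X ω‖ ^ 2
          = e ω * (t - ‖m - X ω‖) ^ 2 := by ring
      rw [this]
      positivity
    have hint1 : Integrable (fun ω => t ^ 2 * e ω) μ := hI1.const_mul _
    have hint2 : Integrable (fun ω => 2 * t * (e ω * ‖m - X ω‖)) μ := hIA.const_mul _
    have hint12 : Integrable (fun ω => t ^ 2 * e ω - 2 * t * (e ω * ‖m - X ω‖)) μ :=
      hint1.sub hint2
    rw [integral_add hint12 hIB, integral_sub hint1 hint2, integral_const_mul,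
      integral_const_mul, ← hM, ← hA, ← hB] at hq
    have hM' : M ≠ 0 := hMpos.ne'
    rw [ht] at hq
    have : 0 ≤ A ^ 2 / M - 2 * (A ^ 2 / M) + B := by
      have h1 : (A / M) ^ 2 * M = A ^ 2 / M := by field_simp
      have h2 : 2 * (A / M) * A = 2 * (A ^ 2 / M) := by field_simp
      rw [h1, h2] at hq; exact hq
    have : A ^ 2 / M ≤ B := by linarith
    calc A ^ 2 = (A ^ 2 / M) * M := by field_simp
      _ ≤ B * M := by exact mul_le_mul_of_nonneg_right this hMpos.le
      _ = M * B := mul_comm _ _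
  -- B ≤ exp(-β Lm) V
  have hBle : B ≤ Real.exp (-β * Lm) * V := by
    have hVeq : V = ∫ ω, ‖m - X ω‖ ^ 2 ∂μ := by
      rw [hV]
      exact integral_congr_ae (Filter.Eventually.of_forall fun ω => by
        simp [norm_sub_rev])
    rw [hVeq, hB, ← integral_const_mul]
    refine integral_mono hIB (hInm2'.const_mul _) fun ω => ?_
    exact mul_le_mul_of_nonneg_right (hebd ω) (by positivity)
  -- bound on ‖m - xbar‖
  have hnorm : ‖m - xbar‖ ≤ M⁻¹ * A := by
    rw [hrep, norm_smul, Real.norm_eq_abs, abs_of_nonneg (by positivity)]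
    refine mul_le_mul_of_nonneg_left ?_ (by positivity)
    calc ‖∫ ω, e ω • (m - X ω) ∂μ‖ ≤ ∫ ω, ‖e ω • (m - X ω)‖ ∂μ :=
          norm_integral_le_integral_norm _
      _ = A := by
          rw [hA]
          refine integral_congr_ae (Filter.Eventually.of_forall fun ω => ?_)
          show ‖e ω • (m - X ω)‖ = e ω * ‖m - X ω‖
          rw [norm_smul, Real.norm_eq_abs, abs_of_nonneg (hepos ω).le]
  have hsq : ‖m - xbar‖ ^ 2 ≤ Real.exp (-β * Lm) * V / M := by
    have h1 : ‖m - xbar‖ ^ 2 ≤ (M⁻¹ * A) ^ 2 :=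
      pow_le_pow_left₀ (norm_nonneg _) hnorm 2
    have h2 : (M⁻¹ * A) ^ 2 = A ^ 2 / M ^ 2 := by field_simp
    have h3 : A ^ 2 / M ^ 2 ≤ (M * B) / M ^ 2 := by gcongr
    have h4 : (M * B) / M ^ 2 = B / M := by field_simp
    have h5 : B / M ≤ Real.exp (-β * Lm) * V / M := by gcongr
    calc ‖m - xbar‖ ^ 2 ≤ (M⁻¹ * A) ^ 2 := h1
      _ = A ^ 2 / M ^ 2 := h2
      _ ≤ (M * B) / M ^ 2 := h3
      _ = B / M := h4
      _ ≤ Real.exp (-β * Lm) * V / M := h5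
  rw [hdecomp]
  linarith
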